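/- No HDT0L system computes the function aⁿ ↦ (aⁿ b)^{n+1}: for every finite alphabet Δ, every initial word d ∈ Δ*, every monoid morphism h : Δ* → Δ* and every morphism h' : Δ* → {a,b}*, there exists n ∈ ℕ such that h'(hⁿ(d)) ≠ (aⁿ b)^{n+1}. -/

import Mathlib

open List

section Aux

variable {σ τ : Type*}

lemma morph_nil (g : List σ → List τ) (hg : ∀ x y, g (x ++ y) = g x ++ g y) :
    g [] = [] := by
  have h1 := hg [] []
  simp only [List.append_nil] at h1
  have hl := congrArg List.length h1
  simp only [List.length_append] at hl
  exact List.eq_nil_of_length_eq_zero (by omega)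

lemma morph_cons (g : List σ → List τ) (hg : ∀ x y, g (x ++ y) = g x ++ g y)
    (c : σ) (w : List σ) : g (c :: w) = g [c] ++ g w := by
  simpa using hg [c] w

lemma iterate_morph (h : List σ → List σ) (hh : ∀ x y, h (x ++ y) = h x ++ h y)
    (u : ℕ) : ∀ x y, h^[u] (x ++ y) = h^[u] x ++ h^[u] y := by
  induction u with
  | zero => intro x y; simp
  | succ u ih =>
    intro x y
    simp only [Function.iterate_succ_apply, hh, ih]

/-- Count of falses under a morphism when every letter contributes at most one. -/
lemma count_morph_le (g : List σ → List Bool) (hg : ∀ x y, g (x ++ y) = g x ++ g y) :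
    ∀ w : List σ, (∀ c ∈ w, (g [c]).count false ≤ 1) → (g w).count false ≤ w.length := by
  intro w
  induction w with
  | nil => intro _; simp [morph_nil g hg]
  | cons c w ih =>
    intro hw
    rw [morph_cons g hg, List.count_append]
    have h1 : (g [c]).count false ≤ 1 := hw c (by simp)
    have h2 := ih (fun c' hc' => hw c' (by simp [hc']))
    simp only [List.length_cons]
    omega

/-- extracting two falses -/
lemma two_falses : ∀ (l : List Bool), 2 ≤ l.count false →
    ∃ p q r, l = p ++ false :: q ++ false :: r := by
  intro l
  induction l with
  | nil => intro h2; simp at h2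
  | cons c l ih =>
    intro h2
    rw [List.count_cons] at h2
    by_cases hc : c = false
    · subst hc
      have h1 : 1 ≤ l.count false := by
        simp only [show (false == false) = true from rfl, if_pos] at h2
        omega
      have hmem : false ∈ l := List.count_pos_iff.mp h1
      obtain ⟨q, r, hqr⟩ := List.append_of_mem hmem
      exact ⟨[], q, r, by simp [hqr]⟩
    · have h1 : 2 ≤ l.count false := by
        have hcb : (c == false) = false := by simp [hc]
        rw [hcb] at h2; simpa using h2
      obtain ⟨p, q, r, hpqr⟩ := ih h1
      exact ⟨c :: p, q, r, by simp [hpqr]⟩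

/-- In `(aᴹb)^k`, any prefix ending just before a `false` ends with `M` trues. -/
lemma block_before_false (M : ℕ) :
    ∀ (k : ℕ) (α β : List Bool),
      (List.replicate k (List.replicate M true ++ [false])).flatten = α ++ false :: β →
      ∃ α', α = α' ++ List.replicate M true := by
  intro k
  induction k with
  | zero =>
    intro α β hαβ
    simp only [List.replicate_zero, List.flatten_nil] at hαβ
    exact absurd hαβ.symm (by simp)
  | succ k ih =>
    intro α β hαβ
    rw [List.replicate_succ, List.flatten_cons] at hαβ
    set B : List Bool := List.replicate M true ++ [false] with hB
    set rest := (List.replicate k B).flatten with hrest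
    have hBlen : B.length = M + 1 := by simp [hB]
    rcases lt_trichotomy α.length M with hlt | heq | hgt
    · exfalso
      have h1 : (α ++ false :: β)[α.length]? = some false := by
        rw [List.getElem?_append_right le_rfl]
        simp
      have h2 : ((B ++ rest))[α.length]? = some true := by
        rw [hB, List.append_assoc]
        rw [List.getElem?_append_left (by simp; omega)]
        simp [hlt]
      rw [hαβ, h1] at h2
      exact Bool.noConfusion (Option.some.inj h2)
    · refine ⟨[], ?_⟩
      have h1 : α = (α ++ false :: β).take α.length := by simp
      rw [← hαβ, hB, List.append_assoc, heq, List.take_left' (by simp)] at h1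
      simpa using h1
    · have hlen : M + 1 ≤ α.length := hgt
      have hrest2 : rest = α.drop (M + 1) ++ false :: β := by
        have := congrArg (List.drop (M + 1)) hαβ
        rw [← hBlen, List.drop_left] at this
        rw [this, List.drop_append, hBlen]
        have : α.length ≤ M + 1 ∨ M + 1 - α.length = 0 := by omega
        rw [show M + 1 - α.length = 0 by omega, List.drop_zero]
      obtain ⟨α'', hα''⟩ := ih _ _ hrest2
      refine ⟨B ++ α'', ?_⟩
      have hα : α = B ++ α.drop (M + 1) := by
        have h1 := congrArg (List.take α.length) hαβ
        rw [List.take_left, List.take_append,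
          List.take_of_length_le (by omega)] at h1
        have h2 : List.take (α.length - B.length) rest = α.drop (M + 1) := by
          rw [hBlen, hrest2]
          exact List.take_left' (by simp)
        rw [h2] at h1; exact h1.symm
      rw [hα, hα'', hB]
      simp

end Aux

lemma target_count (M : ℕ) :
    ((List.replicate (M+1) (List.replicate M true ++ [false])).flatten).count false = M + 1 := by
  rw [List.count_flatten]
  simp [List.count_replicate]

lemma no_close_false {X A q γ : List Bool} {M : ℕ}
    (h1 : X = A ++ false :: q) (h2 : X = γ ++ List.replicate M true)
    (hq : q.length < M) : False := by
  have hlen : A.length + (q.length + 1) = γ.length + M := by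
    have := congrArg List.length (h1.symm.trans h2)
    simpa using this
  have hA : γ.length ≤ A.length := by omega
  have e1 : X[A.length]? = some false := by
    rw [h1, List.getElem?_append_right le_rfl]; simp
  have e2 : X[A.length]? = some true := by
    rw [h2, List.getElem?_append_right hA, List.getElem?_replicate]
    rw [if_pos (by omega)]
  rw [e1] at e2
  exact Bool.noConfusion (Option.some.inj e2)

/-- No HDT0L system with unary input computes `aⁿ ↦ (aⁿb)^{n+1}`.
Here the output alphabet `{a,b}` is encoded as `Bool` with `a = true`, `b = false`. -/
theorem hdt0l_not_anb {Δ : Type*} [Fintype Δ]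
    (d : List Δ) (h : List Δ → List Δ) (h' : List Δ → List Bool)
    (hh : ∀ x y : List Δ, h (x ++ y) = h x ++ h y)
    (hh' : ∀ x y : List Δ, h' (x ++ y) = h' x ++ h' y) :
    ∃ n : ℕ, h' (h^[n] d) ≠
      (List.replicate (n+1) (List.replicate n true ++ [false])).flatten := by
  classical
  by_contra hcon
  push_neg at hcon
  -- the letter-set dynamics
  set F : Finset Δ → Finset Δ := fun s => s.biUnion (fun c => (h [c]).toFinset) with hF
  have hS : ∀ w : List Δ, (h w).toFinset = F w.toFinset := by
    intro w
    induction w with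
    | nil => simp [morph_nil h hh, hF]
    | cons c w ih =>
      rw [morph_cons h hh, List.toFinset_append, ih]
      simp [hF, Finset.biUnion_insert]
  have hiter : ∀ n : ℕ, (h^[n] d).toFinset = F^[n] d.toFinset := by
    intro n
    induction n with
    | zero => simp
    | succ n ih =>
      rw [Function.iterate_succ_apply', Function.iterate_succ_apply', hS, ih]
  -- pigeonhole
  have key : ∃ n m, n < m ∧ F^[n] d.toFinset = F^[m] d.toFinset := by
    obtain ⟨n₀, m₀, hne, heq⟩ :=
      Finite.exists_ne_map_eq_of_infinite (fun n : ℕ => F^[n] d.toFinset)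
    rcases Nat.lt_or_ge n₀ m₀ with hlt | hge
    · exact ⟨n₀, m₀, hlt, heq⟩
    · exact ⟨m₀, n₀, by omega, heq.symm⟩
  obtain ⟨n, m₀, hlt, heq⟩ := key
  set t := m₀ - n with htdef
  have ht : 0 < t := by omega
  have hFt : F^[n + t] d.toFinset = F^[n] d.toFinset := by
    have : n + t = m₀ := by omega
    rw [this, heq]
  have hAP : ∀ k : ℕ, F^[n + k * t] d.toFinset = F^[n] d.toFinset := by
    intro k
    induction k with
    | zero => simp
    | succ k ih =>
      have e : n + (k + 1) * t = k * t + (n + t) := by ring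
      rw [e, Function.iterate_add_apply, hFt, ← Function.iterate_add_apply]
      rw [show k * t + n = n + k * t by ring, ih]
  by_cases hA : ∃ u : ℕ, ∃ c ∈ h^[n] d, 2 ≤ (h' (h^[u] [c])).count false
  · -- Case A : some letter eventually produces two `false`s
    obtain ⟨u, c, hcmem, h2⟩ := hA
    set z := h' (h^[u] [c]) with hz
    set k := z.length + 1 with hk
    set N := n + k * t with hN
    have hzN : z.length < N := by
      have h1 : k ≤ k * t := Nat.le_mul_of_pos_right k ht
      omega
    have hcN : c ∈ h^[N] d := by
      rw [← List.mem_toFinset, hiter, hN, hAP k, ← hiter, List.mem_toFinset]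
      exact hcmem
    obtain ⟨s, t', hst⟩ := List.append_of_mem hcN
    set M := u + N with hM
    have hdecomp : h' (h^[M] d) = h' (h^[u] s) ++ z ++ h' (h^[u] t') := by
      rw [hM, Function.iterate_add_apply, hst]
      rw [show s ++ c :: t' = s ++ ([c] ++ t') by simp]
      rw [iterate_morph h hh u, iterate_morph h hh u, hh', hh', hz]
      simp [List.append_assoc]
    obtain ⟨p, q, r, hpqr⟩ := two_falses z h2
    have hqlen : q.length < M := by
      have : z.length = p.length + (q.length + (r.length + 2)) := by
        rw [hpqr]; simp; ring
      omega
    have hWM : (List.replicate (M+1) (List.replicate M true ++ [false])).flatten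
        = (h' (h^[u] s) ++ p ++ false :: q) ++ false :: (r ++ h' (h^[u] t')) := by
      rw [← hcon M, hdecomp, hpqr]
      simp [List.append_assoc]
    obtain ⟨γ, hγ⟩ := block_before_false M (M+1) _ _ hWM
    exact no_close_false (A := h' (h^[u] s) ++ p) (q := q)
      (show h' (h^[u] s) ++ p ++ false :: q = (h' (h^[u] s) ++ p) ++ false :: q by
        simp [List.append_assoc]) hγ hqlen
  · -- Case B : every letter always produces at most one `false`
    push_neg at hA
    set L := (h^[n] d).length with hL
    have hg : ∀ x y : List Δ, h' (h^[L] (x ++ y)) = h' (h^[L] x) ++ h' (h^[L] y) := by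
      intro x y
      rw [iterate_morph h hh L, hh']
    have hcount : (h' (h^[L] (h^[n] d))).count false ≤ L := by
      apply count_morph_le (fun w => h' (h^[L] w)) hg
      intro c hc
      have := hA L c hc
      omega
    have heval : (h' (h^[L + n] d)).count false = L + n + 1 := by
      rw [hcon (L + n), target_count]
    rw [Function.iterate_add_apply] at heval
    omega
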